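/- Let s ≥ 1, t ≥ 0, and m ≥ t + s. If a polynomial g ∈ (ℤ/2)[y_1,…,y_s] maps to 0 in Q_s under the quotient map sending y_i to x_i, then the element x_1 x_2 ⋯ x_t · g(x_{t+1}, x_{t+2}, …, x_{t+s}) equals 0 in Q_m. -/

import Mathlib

open MvPolynomial Finset
open Fin.NatCast

noncomputable section

/-- The defining ideal of `Q_m`: generated by `x_1^2` and `x_i^2 - x_{i-1} x_i` for `2 ≤ i ≤ m`
(variables are 1-based; `X ((i-1 : ℕ) : Fin m)` is `x_i`). -/
def Qrel (m : ℕ) [NeZero m] : Ideal (MvPolynomial (Fin m) (ZMod 2)) :=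
  Ideal.span ((fun i : ℕ =>
      X ((i - 1 : ℕ) : Fin m) ^ 2 -
        (if i = 1 then 0 else X ((i - 2 : ℕ) : Fin m) * X ((i - 1 : ℕ) : Fin m))) ''
    Set.Icc 1 m)

/-- The ring `Q_m`. -/
abbrev Qring (m : ℕ) [NeZero m] : Type :=
  MvPolynomial (Fin m) (ZMod 2) ⧸ Qrel m

/-- The image of `x_i` (1-based, for `1 ≤ i ≤ m`) in `Q_m`. -/
def xQ (m : ℕ) [NeZero m] (i : ℕ) : Qring m :=
  Ideal.Quotient.mk (Qrel m) (X ((i - 1 : ℕ) : Fin m))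

lemma gen_mem (m : ℕ) [NeZero m] {i : ℕ} (hi : 1 ≤ i) (him : i ≤ m) :
    X ((i - 1 : ℕ) : Fin m) ^ 2 -
        (if i = 1 then 0 else X ((i - 2 : ℕ) : Fin m) * X ((i - 1 : ℕ) : Fin m)) ∈ Qrel m :=
  Ideal.subset_span ⟨i, ⟨hi, him⟩, rfl⟩

/-- `x_1 ⋯ x_t · x_{t+1}^2 ∈ Qrel m`. -/
lemma lemA (m : ℕ) [NeZero m] : ∀ t : ℕ, t + 1 ≤ m →
    (∏ i ∈ Finset.Icc 1 t, X ((i - 1 : ℕ) : Fin m)) * X ((t : ℕ) : Fin m) ^ 2 ∈ Qrel m := by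
  intro t
  induction t with
  | zero =>
    intro _
    simpa using gen_mem m (i := 1) le_rfl (NeZero.one_le)
  | succ t ih =>
    intro h
    have ih' := ih (by omega)
    have hgen := gen_mem m (i := t + 2) (by omega) (by omega)
    rw [if_neg (by omega)] at hgen
    have h1 : (t + 2 - 1 : ℕ) = t + 1 := by omega
    have h2 : (t + 2 - 2 : ℕ) = t := by omega
    rw [h1, h2] at hgen
    have hprod : (∏ i ∈ Finset.Icc 1 (t + 1), (X ((i - 1 : ℕ) : Fin m) : MvPolynomial (Fin m) (ZMod 2)))
        = (∏ i ∈ Finset.Icc 1 t, X ((i - 1 : ℕ) : Fin m)) * X ((t : ℕ) : Fin m) := by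
      rw [Finset.prod_Icc_succ_top (a := 1) (b := t) (by omega)
        (fun i => (X ((i - 1 : ℕ) : Fin m) : MvPolynomial (Fin m) (ZMod 2))),
        Nat.add_sub_cancel]
    have key : (∏ i ∈ Finset.Icc 1 (t + 1), (X ((i - 1 : ℕ) : Fin m) : MvPolynomial (Fin m) (ZMod 2))) *
        X (((t + 1 : ℕ)) : Fin m) ^ 2
        = (∏ i ∈ Finset.Icc 1 (t + 1), X ((i - 1 : ℕ) : Fin m)) *
          (X (((t + 1 : ℕ)) : Fin m) ^ 2 - X ((t : ℕ) : Fin m) * X (((t + 1 : ℕ)) : Fin m))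
          + ((∏ i ∈ Finset.Icc 1 t, X ((i - 1 : ℕ) : Fin m)) * X ((t : ℕ) : Fin m) ^ 2)
            * X (((t + 1 : ℕ)) : Fin m) := by
      rw [hprod]; ring
    rw [key]
    exact add_mem (Ideal.mul_mem_left _ _ hgen) (Ideal.mul_mem_right _ _ ih')

/-- If `g ∈ (ℤ/2)[y_1, …, y_s]` maps to `0` in `Q_s`, then for `m ≥ t + s`,
`x_1 ⋯ x_t ⋅ g(x_{t+1}, …, x_{t+s}) = 0` in `Q_m`.
(The variable `y_i` of `g`, `1 ≤ i ≤ s`, is `X (i-1 : Fin s)` and is sent to `x_{t+i}`.) -/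
theorem statement17 (s t m : ℕ) [NeZero s] [NeZero m] (hs : 1 ≤ s) (hm : t + s ≤ m)
    (g : MvPolynomial (Fin s) (ZMod 2))
    (hg : Ideal.Quotient.mk (Qrel s) g = 0) :
    (∏ i ∈ Finset.Icc 1 t, xQ m i) *
      MvPolynomial.aeval (fun i : Fin s => xQ m (t + (i : ℕ) + 1)) g = 0 := by
  have hgmem : g ∈ Qrel s := (Ideal.Quotient.eq_zero_iff_mem).1 hg
  set f : Fin s → Fin m := fun i => ((t + (i : ℕ) : ℕ) : Fin m) with hf
  set P : MvPolynomial (Fin m) (ZMod 2) := ∏ i ∈ Finset.Icc 1 t, X ((i - 1 : ℕ) : Fin m)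
    with hP
  -- rewrite aeval through the quotient
  have haeval : (MvPolynomial.aeval (fun i : Fin s => xQ m (t + (i : ℕ) + 1)) g : Qring m)
      = Ideal.Quotient.mkₐ (ZMod 2) (Qrel m) (MvPolynomial.aeval (fun i => X (f i)) g) := by
    rw [comp_aeval_apply]
    rfl
  have hprod : (∏ i ∈ Finset.Icc 1 t, xQ m i)
      = Ideal.Quotient.mkₐ (ZMod 2) (Qrel m) P := by
    simp only [hP, map_prod]; rfl
  rw [haeval, hprod, ← map_mul]
  rw [show (Ideal.Quotient.mkₐ (ZMod 2) (Qrel m)) (P * aeval (fun i => X (f i)) g)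
      = Ideal.Quotient.mk (Qrel m) (P * aeval (fun i => X (f i)) g) from rfl,
    Ideal.Quotient.eq_zero_iff_mem]
  -- span induction
  refine Submodule.span_induction ?_ ?_ ?_ ?_ hgmem
  · rintro p ⟨i, ⟨hi1, his⟩, rfl⟩
    dsimp only
    by_cases h1 : i = 1
    · subst h1
      rw [if_pos rfl, sub_zero, map_pow, aeval_X]
      have hv : f (((1 - 1 : ℕ) : Fin s)) = ((t : ℕ) : Fin m) := by simp [hf]
      rw [hv]
      exact lemA m t (by omega)
    · rw [if_neg h1]
      simp only [map_sub, map_pow, map_mul, aeval_X]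
      have hv1 : f (((i - 1 : ℕ) : Fin s)) = ((t + i - 1 : ℕ) : Fin m) := by
        simp only [hf]
        congr 1
        rw [Fin.val_cast_of_lt (by omega)]
        omega
      have hv2 : f (((i - 2 : ℕ) : Fin s)) = ((t + i - 2 : ℕ) : Fin m) := by
        simp only [hf]
        congr 1
        rw [Fin.val_cast_of_lt (by omega)]
        omega
      rw [hv1, hv2]
      have hgen := gen_mem m (i := t + i) (by omega) (by omega)
      rw [if_neg (by omega)] at hgen
      exact Ideal.mul_mem_left _ _ hgen
  · simp
  · intro x y _ _ hx hy
    rw [map_add, mul_add]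
    exact add_mem hx hy
  · intro a x _ hx
    rw [smul_eq_mul, map_mul]
    rw [show P * (aeval (fun i => X (f i)) a * aeval (fun i => X (f i)) x)
        = aeval (fun i => X (f i)) a * (P * aeval (fun i => X (f i)) x) by ring]
    exact Ideal.mul_mem_left _ _ hx
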